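/- For every d ∈ ℕ and every real α < 1, there exists a finite set B of orthonormal bases of ℂ^d such that for every finite set S and every projection-valued measurement E = {E_s : s ∈ S} over ℂ^d, there is a basis {v₁,…,v_d} ∈ B and a partition {τ_s : s ∈ S} of [d] with ‖E_s v_j‖ > α for every s ∈ S and every j ∈ τ_s. -/

import Mathlib

open scoped InnerProductSpace

noncomputable section

/-- An orthogonal projector on the Hilbert space `ℂ^d`. -/
def IsProjector {d : ℕ}
    (E : EuclideanSpace ℂ (Fin d) →L[ℂ] EuclideanSpace ℂ (Fin d)) : Prop :=
  IsSelfAdjoint E ∧ E ∘L E = E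

/-- A projection-valued measurement over `ℂ^d` indexed by a finite set `S`. -/
def IsPVM {d : ℕ} {S : Type} [Fintype S]
    (E : S → (EuclideanSpace ℂ (Fin d) →L[ℂ] EuclideanSpace ℂ (Fin d))) : Prop :=
  (∀ s, IsProjector (E s)) ∧ ∑ s, E s = 1

lemma proj_norm_le {d : ℕ} {E : EuclideanSpace ℂ (Fin d) →L[ℂ] EuclideanSpace ℂ (Fin d)}
    (h : IsProjector E) (x : EuclideanSpace ℂ (Fin d)) : ‖E x‖ ≤ ‖x‖ := by
  have hadj : ∀ a b : EuclideanSpace ℂ (Fin d), ⟪E a, b⟫_ℂ = ⟪a, E b⟫_ℂ := by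
    intro a b
    conv_lhs => rw [← h.1, ContinuousLinearMap.star_eq_adjoint]
    rw [ContinuousLinearMap.adjoint_inner_left]
  have h1 : ⟪E x, E x⟫_ℂ = ⟪x, E x⟫_ℂ := by
    rw [hadj, ← ContinuousLinearMap.comp_apply, h.2]
  have h2 : (‖E x‖ : ℂ)^2 = ⟪x, E x⟫_ℂ := by
    rw [← h1, inner_self_eq_norm_sq_to_K]; norm_cast
  have h3 : ‖E x‖^2 ≤ ‖x‖ * ‖E x‖ := by
    calc ‖E x‖^2 = ‖(‖E x‖ : ℂ)^2‖ := by
          rw [norm_pow, Complex.norm_real, Real.norm_eq_abs, abs_norm]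
      _ = ‖⟪x, E x⟫_ℂ‖ := by rw [h2]
      _ ≤ ‖x‖ * ‖E x‖ := norm_inner_le_norm x (E x)
  nlinarith [norm_nonneg (E x), norm_nonneg x]

lemma pvm_eigenbasis {H : Type} [NormedAddCommGroup H] [InnerProductSpace ℂ H]
    [FiniteDimensional ℂ H] {S : Type} [Fintype S]
    (E : S → (H →L[ℂ] H))
    (hsa : ∀ s, IsSelfAdjoint (E s))
    (hidem : ∀ s, E s ∘L E s = E s)
    (hsum1 : ∑ s, E s = 1)
    (d : ℕ) (hd : Module.finrank ℂ H = d) :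
    ∃ (v : Fin d → H) (p : Fin d → S),
      Orthonormal ℂ v ∧ ∀ j, E (p j) (v j) = v j := by
  classical
  have hadj : ∀ s (x y : H), ⟪E s x, y⟫_ℂ = ⟪x, E s y⟫_ℂ := by
    intro s x y
    conv_lhs => rw [← hsa s, ContinuousLinearMap.star_eq_adjoint]
    rw [ContinuousLinearMap.adjoint_inner_left]
  let K : S → Submodule ℂ H := fun s => LinearMap.range (E s : H →ₗ[ℂ] H)
  have hfix : ∀ s x, x ∈ K s → E s x = x := by
    rintro s x ⟨a, rfl⟩
    have : (E s ∘L E s) a = E s a := by rw [hidem s]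
    simpa using this
  have hsum : ∀ z, ∑ s, E s z = z := by
    intro z
    calc ∑ s, E s z = (∑ s, E s) z := by simp [ContinuousLinearMap.sum_apply]
      _ = z := by rw [hsum1]; rfl
  have hsq : ∀ s (z : H), ⟪z, E s z⟫_ℂ = ((‖E s z‖^2 : ℝ) : ℂ) := by
    intro s z
    have h1 : ⟪E s z, E s z⟫_ℂ = ⟪z, E s z⟫_ℂ := by
      rw [hadj s, ← ContinuousLinearMap.comp_apply, hidem s]
    rw [← h1, inner_self_eq_norm_sq_to_K]; norm_cast
  have hzero : ∀ (t : S) y, E t y = y → ∀ s, s ≠ t → E s y = 0 := by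
    intro t y hty s hst
    have htotal : ((‖y‖^2 : ℝ) : ℂ) = ∑ s, ((‖E s y‖^2 : ℝ) : ℂ) := by
      calc ((‖y‖^2 : ℝ) : ℂ) = ⟪y, y⟫_ℂ := by
            rw [inner_self_eq_norm_sq_to_K]; norm_cast
        _ = ⟪y, ∑ s, E s y⟫_ℂ := by rw [hsum y]
        _ = ∑ s, ⟪y, E s y⟫_ℂ := inner_sum _ _ _
        _ = ∑ s, ((‖E s y‖^2 : ℝ) : ℂ) := by simp [hsq]
    have htotalR : (‖y‖^2 : ℝ) = ∑ s, (‖E s y‖^2 : ℝ) := by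
      exact_mod_cast htotal
    have hterm : ‖E t y‖^2 = ‖y‖^2 := by rw [hty]
    have hrest : ∑ s ∈ Finset.univ.erase t, ‖E s y‖^2 = 0 := by
      have h := Finset.add_sum_erase Finset.univ (fun s => ‖E s y‖^2)
        (Finset.mem_univ t)
      beta_reduce at h
      rw [hterm] at h
      rw [← h] at htotalR
      linarith
    have hmem : s ∈ Finset.univ.erase t := Finset.mem_erase.mpr ⟨hst, Finset.mem_univ s⟩
    have h0 := (Finset.sum_eq_zero_iff_of_nonneg
      (fun i _ => sq_nonneg ‖E i y‖)).mp hrest s hmem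
    have : ‖E s y‖ = 0 := by nlinarith [norm_nonneg (E s y)]
    exact norm_eq_zero.mp this
  have hOrth : OrthogonalFamily ℂ (fun s => ↥(K s)) (fun s => (K s).subtypeₗᵢ) := by
    intro s t hst x y
    have hx : E s (x : H) = x := hfix s x x.2
    have hy : E s (y : H) = 0 := hzero t y (hfix t y y.2) s hst
    calc ⟪(K s).subtypeₗᵢ x, (K t).subtypeₗᵢ y⟫_ℂ
        = ⟪E s (x : H), (y : H)⟫_ℂ := by rw [hx]; rfl
      _ = ⟪(x : H), E s (y : H)⟫_ℂ := hadj s _ _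
      _ = 0 := by rw [hy, inner_zero_right]
  have hTop : ⨆ s, K s = ⊤ := by
    rw [eq_top_iff]
    intro x _
    rw [← hsum x]
    exact Submodule.sum_mem _ fun s _ => Submodule.mem_iSup_of_mem s ⟨x, rfl⟩
  have hInt : DirectSum.IsInternal K :=
    hOrth.isInternal_iff.mpr (by rw [hTop, Submodule.top_orthogonal_eq_bot])
  let OB := hInt.collectedOrthonormalBasis hOrth
    (fun s => stdOrthonormalBasis ℂ (K s))
  have hcard : Fintype.card (Σ s, Fin (Module.finrank ℂ ↥(K s))) = d := by
    have h1 := Module.finrank_eq_card_basis OB.toBasis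
    omega
  let e : Fin d ≃ (Σ s, Fin (Module.finrank ℂ ↥(K s))) :=
    (Fintype.equivFinOfCardEq hcard).symm
  refine ⟨fun j => OB (e j), fun j => (e j).1, OB.orthonormal.comp e e.injective, ?_⟩
  intro j
  exact hfix _ _ (hInt.collectedOrthonormalBasis_mem hOrth
    (fun s => stdOrthonormalBasis ℂ (K s)) (e j))

/-- For every `d` and every `α < 1` there is a finite set of orthonormal bases of `ℂ^d`
(a family indexed by `Fin N`) such that every PVM over `ℂ^d` is "almost diagonalised"
by one of them: for some basis in the family and some partition of `[d]` (encoded by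
`p : Fin d → S`), each basis vector `v_j` satisfies `‖E_{p j} v_j‖ > α`. -/
theorem finite_indicator_bases (d : ℕ) (α : ℝ) (hα : α < 1) :
    ∃ (N : ℕ) (B : Fin N → (Fin d → EuclideanSpace ℂ (Fin d))),
      (∀ b : Fin N, Orthonormal ℂ (B b)) ∧
      ∀ (S : Type) [Fintype S]
        (E : S → (EuclideanSpace ℂ (Fin d) →L[ℂ] EuclideanSpace ℂ (Fin d))),
        IsPVM E →
        ∃ (b : Fin N) (p : Fin d → S), ∀ j : Fin d, α < ‖E (p j) (B b j)‖ := by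
  classical
  set K : Set (Fin d → EuclideanSpace ℂ (Fin d)) := {v | Orthonormal ℂ v} with hKdef
  have hKclosed : IsClosed K := by
    have : K = ⋂ (i : Fin d) (j : Fin d),
        {v : Fin d → EuclideanSpace ℂ (Fin d) |
          ⟪v i, v j⟫_ℂ = if i = j then 1 else 0} := by
      ext v
      simp only [Set.mem_setOf_eq, Set.mem_iInter, hKdef]
      rw [orthonormal_iff_ite]
    rw [this]
    refine isClosed_iInter fun i => isClosed_iInter fun j => ?_
    exact isClosed_eq (Continuous.inner (continuous_apply i) (continuous_apply j))
      continuous_const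
  have hKbdd : Bornology.IsBounded K := by
    apply Bornology.IsBounded.subset (Metric.isBounded_closedBall (x := 0) (r := 1))
    intro v hv
    rw [Metric.mem_closedBall, dist_zero_right]
    rw [pi_norm_le_iff_of_nonneg zero_le_one]
    intro j
    exact le_of_eq (hv.1 j)
  have hKcpt : IsCompact K := Metric.isCompact_of_isClosed_isBounded hKclosed hKbdd
  set ε : ℝ := 1 - α with hε
  have hεpos : 0 < ε := by linarith
  have hcover : K ⊆ ⋃ x ∈ K, Metric.ball x ε := fun x hx =>
    Set.mem_biUnion hx (Metric.mem_ball_self hεpos)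
  obtain ⟨t, htK, htfin, htcover⟩ :=
    hKcpt.elim_finite_subcover_image (fun x _ => Metric.isOpen_ball) hcover
  haveI := htfin.fintype
  let F : Finset (Fin d → EuclideanSpace ℂ (Fin d)) := htfin.toFinset
  refine ⟨F.card, fun i => (F.equivFin.symm i : _), ?_, ?_⟩
  · intro b
    have : ((F.equivFin.symm b : _) : Fin d → EuclideanSpace ℂ (Fin d)) ∈ t := by
      have := (F.equivFin.symm b).2
      simpa [F, Set.Finite.mem_toFinset] using this
    exact htK this
  · intro S _ E hE
    obtain ⟨v, p, hv, hvfix⟩ := pvm_eigenbasis E (fun s => (hE.1 s).1) (fun s => (hE.1 s).2) hE.2 d finrank_euclideanSpace_fin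
    have hvK : v ∈ K := hv
    obtain ⟨y, hyt, hyball⟩ := Set.mem_iUnion₂.mp (htcover hvK)
    have hyF : y ∈ F := by simpa [F, Set.Finite.mem_toFinset] using hyt
    refine ⟨F.equivFin ⟨y, hyF⟩, p, fun j => ?_⟩
    show α < ‖E (p j) (((F.equivFin.symm (F.equivFin ⟨y, hyF⟩) : _) :
        Fin d → EuclideanSpace ℂ (Fin d)) j)‖
    rw [Equiv.symm_apply_apply]
    have hdist : dist v y < ε := Metric.mem_ball.mp hyball
    have hj : ‖v j - y j‖ < ε := by
      have := dist_le_pi_dist v y j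
      rw [dist_eq_norm] at this
      linarith
    have h1 : ‖E (p j) (v j - y j)‖ ≤ ‖v j - y j‖ := proj_norm_le (hE.1 _) _
    have h2 : ‖E (p j) (v j)‖ = 1 := by rw [hvfix j]; exact hv.1 j
    have h3 : ‖E (p j) (v j)‖ ≤ ‖E (p j) (y j)‖ + ‖E (p j) (v j - y j)‖ := by
      have : E (p j) (v j) = E (p j) (y j) + E (p j) (v j - y j) := by
        rw [← map_add]; congr 1; abel
      rw [this]; exact norm_add_le _ _
    have : (1 : ℝ) ≤ ‖E (p j) (y j)‖ + ‖v j - y j‖ := by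
      rw [← h2]; linarith
    linarith
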